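/- Let U on X and V on Y be Hilbert space operators with closed range, and suppose there exist invertible bounded operators K : ker U → ker V and K₊ : ker U* → ker V*. Then U and V are Schur coupled. -/

import Mathlib

open ContinuousLinearMap

/-- 2×2 block operator matrix `[[A, B],[C, D]] : X ⊕ Y → X' ⊕ Y'`. -/
noncomputable def blk {X Y X' Y' : Type*} [NormedAddCommGroup X] [NormedSpace ℝ X]
    [NormedAddCommGroup Y] [NormedSpace ℝ Y] [NormedAddCommGroup X'] [NormedSpace ℝ X']
    [NormedAddCommGroup Y'] [NormedSpace ℝ Y']
    (A : X →L[ℝ] X') (B : Y →L[ℝ] X') (C : X →L[ℝ] Y') (D : Y →L[ℝ] Y') :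
    (X × Y) →L[ℝ] (X' × Y') :=
  (A.coprod B).prod (C.coprod D)

section blocks
variable {X Y X' Y' : Type*} [NormedAddCommGroup X] [NormedSpace ℝ X]
    [NormedAddCommGroup Y] [NormedSpace ℝ Y] [NormedAddCommGroup X'] [NormedSpace ℝ X']
    [NormedAddCommGroup Y'] [NormedSpace ℝ Y']

/-- (1,1)-entry of a block operator. -/
noncomputable def b11 (T : (X × Y) →L[ℝ] (X' × Y')) : X →L[ℝ] X' :=
  (ContinuousLinearMap.fst ℝ X' Y').comp (T.comp (ContinuousLinearMap.inl ℝ X Y))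

/-- (1,2)-entry of a block operator. -/
noncomputable def b12 (T : (X × Y) →L[ℝ] (X' × Y')) : Y →L[ℝ] X' :=
  (ContinuousLinearMap.fst ℝ X' Y').comp (T.comp (ContinuousLinearMap.inr ℝ X Y))

/-- (2,1)-entry of a block operator. -/
noncomputable def b21 (T : (X × Y) →L[ℝ] (X' × Y')) : X →L[ℝ] Y' :=
  (ContinuousLinearMap.snd ℝ X' Y').comp (T.comp (ContinuousLinearMap.inl ℝ X Y))

/-- (2,2)-entry of a block operator. -/
noncomputable def b22 (T : (X × Y) →L[ℝ] (X' × Y')) : Y →L[ℝ] Y' :=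
  (ContinuousLinearMap.snd ℝ X' Y').comp (T.comp (ContinuousLinearMap.inr ℝ X Y))

end blocks


noncomputable section SchurAux

variable {E : Type*} [NormedAddCommGroup E] [InnerProductSpace ℝ E]

lemma orthogonalProjection_add_orthogonalProjection_orthogonal (K : Submodule ℝ E)
    [K.HasOrthogonalProjection] (w : E) :
    (K.orthogonalProjectionOnto w : E) + (Kᗮ.orthogonalProjectionOnto w : E) = w :=
  Submodule.starProjection_add_starProjection_orthogonal (K := K) w

/-- Orthogonal decomposition of a Hilbert space along a subspace. -/
noncomputable def orthDecomp (p : Submodule ℝ E) [Submodule.HasOrthogonalProjection p] :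
    (↥p × ↥pᗮ) ≃L[ℝ] E :=
  ContinuousLinearEquiv.equivOfInverse (p.subtypeL.coprod pᗮ.subtypeL)
    ((Submodule.orthogonalProjectionOnto p).prod (Submodule.orthogonalProjectionOnto pᗮ))
    (fun z => by
      refine Prod.ext ?_ ?_ <;>
      · simp only [coprod_apply, Submodule.subtypeL_apply, prod_apply, map_add]
        simp [Submodule.orthogonalProjectionOnto_mem_subspace_eq_self,
          Submodule.orthogonalProjectionOnto_apply_of_mem_orthogonal z.2.2,
          Submodule.orthogonalProjectionOnto_orthogonal_apply_eq_zero z.1.2])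
    (fun x => by
      simpa using orthogonalProjection_add_orthogonalProjection_orthogonal p x)

@[simp] lemma orthDecomp_apply (p : Submodule ℝ E) [Submodule.HasOrthogonalProjection p]
    (z : ↥p × ↥pᗮ) : orthDecomp p z = ↑z.1 + ↑z.2 := rfl

@[simp] lemma orthDecomp_symm_apply (p : Submodule ℝ E) [Submodule.HasOrthogonalProjection p]
    (x : E) : (orthDecomp p).symm x =
      (Submodule.orthogonalProjectionOnto p x, Submodule.orthogonalProjectionOnto pᗮ x) := rfl

/-- Transport of a submodule inclusion along an equality. -/
noncomputable def subCongr {p q : Submodule ℝ E} (h : p = q) : ↥p ≃L[ℝ] ↥q := by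
  subst h; exact ContinuousLinearEquiv.refl ℝ ↥p

@[simp] lemma subCongr_coe {p q : Submodule ℝ E} (h : p = q) (x : ↥p) :
    ((subCongr h x : ↥q) : E) = (x : E) := by subst h; rfl

end SchurAux

noncomputable section ProdAux

variable (P Q R : Type*) [NormedAddCommGroup P] [NormedSpace ℝ P]
  [NormedAddCommGroup Q] [NormedSpace ℝ Q] [NormedAddCommGroup R] [NormedSpace ℝ R]

noncomputable def cassoc : (P × (Q × R)) ≃L[ℝ] ((P × Q) × R) :=
  ContinuousLinearEquiv.equivOfInverse
    (((fst ℝ P (Q × R)).prod ((fst ℝ Q R).comp (snd ℝ P (Q × R)))).prod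
      ((snd ℝ Q R).comp (snd ℝ P (Q × R))))
    (((fst ℝ P Q).comp (fst ℝ (P × Q) R)).prod
      (((snd ℝ P Q).comp (fst ℝ (P × Q) R)).prod (snd ℝ (P × Q) R)))
    (fun _ => rfl) (fun _ => rfl)

@[simp] lemma cassoc_apply (x : P × (Q × R)) :
    cassoc P Q R x = ((x.1, x.2.1), x.2.2) := rfl

@[simp] lemma cassoc_symm_apply (x : (P × Q) × R) :
    (cassoc P Q R).symm x = (x.1.1, (x.1.2, x.2)) := rfl

noncomputable def cswap : ((P × Q) × R) ≃L[ℝ] ((P × R) × Q) :=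
  ContinuousLinearEquiv.equivOfInverse
    ((((fst ℝ P Q).comp (fst ℝ (P × Q) R)).prod (snd ℝ (P × Q) R)).prod
      ((snd ℝ P Q).comp (fst ℝ (P × Q) R)))
    ((((fst ℝ P R).comp (fst ℝ (P × R) Q)).prod (snd ℝ (P × R) Q)).prod
      ((snd ℝ P R).comp (fst ℝ (P × R) Q)))
    (fun _ => rfl) (fun _ => rfl)

@[simp] lemma cswap_apply (x : (P × Q) × R) :
    cswap P Q R x = ((x.1.1, x.2), x.1.2) := rfl

@[simp] lemma cswap_symm_apply (x : (P × R) × Q) :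
    (cswap P Q R).symm x = ((x.1.1, x.2), x.1.2) := rfl

end ProdAux

section KerAdjoint

variable {E F : Type*} [NormedAddCommGroup E] [InnerProductSpace ℝ E] [CompleteSpace E]
  [NormedAddCommGroup F] [InnerProductSpace ℝ F] [CompleteSpace F]

lemma ker_adjoint_eq (T : E →L[ℝ] F) :
    LinearMap.ker ((ContinuousLinearMap.adjoint T : F →L[ℝ] E) : F →ₗ[ℝ] E) = (LinearMap.range (T : E →ₗ[ℝ] F))ᗮ := by
  ext x
  simp only [LinearMap.mem_ker, Submodule.mem_orthogonal, ContinuousLinearMap.coe_coe]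
  constructor
  · rintro h u ⟨y, rfl⟩
    rw [ContinuousLinearMap.coe_coe, ← ContinuousLinearMap.adjoint_inner_right, h, inner_zero_right]
  · intro h
    rw [← inner_self_eq_zero (𝕜 := ℝ), ContinuousLinearMap.adjoint_inner_left,
      real_inner_comm]
    exact h _ ⟨_, rfl⟩

end KerAdjoint

section Compare

universe u_1 u_2
variable (E : Type u_1) (F : Type u_2) [NormedAddCommGroup E] [InnerProductSpace ℝ E]
  [CompleteSpace E] [NormedAddCommGroup F] [InnerProductSpace ℝ F] [CompleteSpace F]

lemma hilbert_embed_or :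
    Nonempty (E →ₗᵢ[ℝ] F) ∨ Nonempty (F →ₗᵢ[ℝ] E) := by
  obtain ⟨s, b, -⟩ := exists_hilbertBasis ℝ E
  obtain ⟨t, c, -⟩ := exists_hilbertBasis ℝ F
  rcases le_total (Cardinal.lift.{u_2} (Cardinal.mk s)) (Cardinal.lift.{u_1} (Cardinal.mk t))
    with h | h
  · obtain ⟨f⟩ := Cardinal.lift_mk_le'.mp h
    exact Or.inl ⟨((c.orthonormal.comp f f.injective).orthogonalFamily.linearIsometry).comp
      b.repr.toLinearIsometry⟩
  · obtain ⟨f⟩ := Cardinal.lift_mk_le'.mp h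
    exact Or.inr ⟨((b.orthonormal.comp f f.injective).orthogonalFamily.linearIsometry).comp
      c.repr.toLinearIsometry⟩

end Compare

noncomputable section RangeRes

variable {E : Type*} [NormedAddCommGroup E] [InnerProductSpace ℝ E] [CompleteSpace E]

variable (T : E →L[ℝ] E) [CompleteSpace ↥(LinearMap.range (T : E →ₗ[ℝ] E))]

/-- The restriction of `T` to the orthogonal complement of its kernel, as an equivalence
onto its range. -/
noncomputable def rres : ↥(LinearMap.ker (T : E →ₗ[ℝ] E))ᗮ ≃L[ℝ] ↥(LinearMap.range (T : E →ₗ[ℝ] E)) :=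
  ContinuousLinearEquiv.ofBijective
    ((T.comp (LinearMap.ker (T : E →ₗ[ℝ] E))ᗮ.subtypeL).codRestrict (LinearMap.range (T : E →ₗ[ℝ] E))
      (fun n => LinearMap.mem_range.mpr ⟨↑n, rfl⟩))
    (by
      rw [LinearMap.ker_eq_bot']
      intro n hn
      have hn' : T ↑n = 0 := congrArg Subtype.val hn
      have : (↑n : E) ∈ LinearMap.ker (T : E →ₗ[ℝ] E) := LinearMap.mem_ker.mpr hn'
      have h0 : (↑n : E) = 0 := by
        rw [← inner_self_eq_zero (𝕜 := ℝ)]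
        exact n.2 _ this
      exact Subtype.ext h0)
    (by
      rw [LinearMap.range_eq_top]
      rintro ⟨w, hw⟩
      obtain ⟨x, rfl⟩ := LinearMap.mem_range.mp hw
      refine ⟨Submodule.orthogonalProjectionOnto (LinearMap.ker (T : E →ₗ[ℝ] E))ᗮ x, ?_⟩
      apply Subtype.ext
      show T ↑(Submodule.orthogonalProjectionOnto (LinearMap.ker (T : E →ₗ[ℝ] E))ᗮ x) = T x
      conv_rhs => rw [← orthogonalProjection_add_orthogonalProjection_orthogonal
        (LinearMap.ker (T : E →ₗ[ℝ] E)) x]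
      rw [map_add]
      have : T ↑(Submodule.orthogonalProjectionOnto (LinearMap.ker (T : E →ₗ[ℝ] E)) x) = 0 :=
        (Submodule.orthogonalProjectionOnto (LinearMap.ker (T : E →ₗ[ℝ] E)) x).2
      rw [this, zero_add])

@[simp] lemma rres_coe (n : ↥(LinearMap.ker (T : E →ₗ[ℝ] E))ᗮ) : (↑(rres T n) : E) = T ↑n := rfl

end RangeRes

set_option linter.unusedSectionVars false

noncomputable section Master

variable {X Y : Type*} [NormedAddCommGroup X] [InnerProductSpace ℝ X] [CompleteSpace X]
  [NormedAddCommGroup Y] [InnerProductSpace ℝ Y] [CompleteSpace Y]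

variable (U : X →L[ℝ] X) (V : Y →L[ℝ] Y)
  [CompleteSpace ↥(LinearMap.range (U : X →ₗ[ℝ] X))] [CompleteSpace ↥(LinearMap.range (V : Y →ₗ[ℝ] Y))]
  (K : ↥(LinearMap.ker (U : X →ₗ[ℝ] X)) ≃L[ℝ] ↥(LinearMap.ker (V : Y →ₗ[ℝ] Y)))
  (Kp : ↥(LinearMap.ker ((ContinuousLinearMap.adjoint U : X →L[ℝ] X) : X →ₗ[ℝ] X)) ≃L[ℝ]
    ↥(LinearMap.ker ((ContinuousLinearMap.adjoint V : Y →L[ℝ] Y) : Y →ₗ[ℝ] Y)))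
  (ν : ↥(LinearMap.ker (V : Y →ₗ[ℝ] Y))ᗮ →ₗᵢ[ℝ] ↥(LinearMap.ker (U : X →ₗ[ℝ] X))ᗮ)

/-- The range of the comparison isometry. -/
noncomputable def Mnu : Submodule ℝ ↥(LinearMap.ker (U : X →ₗ[ℝ] X))ᗮ :=
  LinearMap.range (ν.toContinuousLinearMap :
    ↥(LinearMap.ker (V : Y →ₗ[ℝ] Y))ᗮ →ₗ[ℝ] ↥(LinearMap.ker (U : X →ₗ[ℝ] X))ᗮ)

instance : CompleteSpace ↥(Mnu U V ν) := by
  refine IsComplete.completeSpace_coe (IsClosed.isComplete ?_)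
  have h : (Mnu U V ν : Set ↥(LinearMap.ker (U : X →ₗ[ℝ] X))ᗮ) = Set.range ⇑ν := by
    rw [Mnu, LinearMap.coe_range]; rfl
  rw [h]
  exact ν.isometry.isUniformInducing.isComplete_range.isClosed

/-- The comparison isometry as an equivalence onto its range. -/
noncomputable def eMd : ↥(LinearMap.ker (V : Y →ₗ[ℝ] Y))ᗮ ≃L[ℝ] ↥(Mnu U V ν) :=
  ContinuousLinearEquiv.ofBijective
    (ν.toContinuousLinearMap.codRestrict (Mnu U V ν)
      (fun m => LinearMap.mem_range.mpr ⟨m, rfl⟩))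
    (by
      rw [LinearMap.ker_eq_bot']
      intro m hm
      have : ν m = 0 := congrArg Subtype.val hm
      exact ν.injective (by simpa using this))
    (by
      rw [LinearMap.range_eq_top]
      rintro ⟨w, hw⟩
      obtain ⟨m, rfl⟩ := LinearMap.mem_range.mp hw
      exact ⟨m, rfl⟩)

@[simp] lemma eMd_coe (m : ↥(LinearMap.ker (V : Y →ₗ[ℝ] Y))ᗮ) :
    ((eMd U V ν m : ↥(Mnu U V ν)) : ↥(LinearMap.ker (U : X →ₗ[ℝ] X))ᗮ) = ν m := rfl

/-- `(n, k') ↦ U n + k'`. -/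
noncomputable def psiU : (↥(LinearMap.ker (U : X →ₗ[ℝ] X))ᗮ ×
    ↥(LinearMap.ker ((ContinuousLinearMap.adjoint U : X →L[ℝ] X) : X →ₗ[ℝ] X))) ≃L[ℝ] X :=
  ((rres U).prodCongr (subCongr (ker_adjoint_eq U))).trans (orthDecomp (LinearMap.range (U : X →ₗ[ℝ] X)))

lemma psiU_apply (n : ↥(LinearMap.ker (U : X →ₗ[ℝ] X))ᗮ)
    (k' : ↥(LinearMap.ker ((ContinuousLinearMap.adjoint U : X →L[ℝ] X) : X →ₗ[ℝ] X))) :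
    psiU U (n, k') = U ↑n + ↑k' := by
  simp [psiU]

/-- `(m, k') ↦ V m + Kp k'`. -/
noncomputable def epsV : (↥(LinearMap.ker (V : Y →ₗ[ℝ] Y))ᗮ ×
    ↥(LinearMap.ker ((ContinuousLinearMap.adjoint U : X →L[ℝ] X) : X →ₗ[ℝ] X))) ≃L[ℝ] Y :=
  ((rres V).prodCongr (Kp.trans (subCongr (ker_adjoint_eq V)))).trans
    (orthDecomp (LinearMap.range (V : Y →ₗ[ℝ] Y)))

lemma epsV_apply (m : ↥(LinearMap.ker (V : Y →ₗ[ℝ] Y))ᗮ)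
    (k' : ↥(LinearMap.ker ((ContinuousLinearMap.adjoint U : X →L[ℝ] X) : X →ₗ[ℝ] X))) :
    epsV U V Kp (m, k') = V ↑m + ↑(Kp k') := by
  simp [epsV]

/-- `(a, m) ↦ K a + m`. -/
noncomputable def phiV : (↥(LinearMap.ker (U : X →ₗ[ℝ] X)) × ↥(LinearMap.ker (V : Y →ₗ[ℝ] Y))ᗮ) ≃L[ℝ] Y :=
  (K.prodCongr (ContinuousLinearEquiv.refl ℝ ↥(LinearMap.ker (V : Y →ₗ[ℝ] Y))ᗮ)).trans
    (orthDecomp (LinearMap.ker (V : Y →ₗ[ℝ] Y)))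

lemma phiV_apply (a : ↥(LinearMap.ker (U : X →ₗ[ℝ] X))) (m : ↥(LinearMap.ker (V : Y →ₗ[ℝ] Y))ᗮ) :
    phiV U V K (a, m) = ↑(K a) + ↑m := by
  simp [phiV]

/-- The change-of-decomposition map of `Y`, in model coordinates. -/
noncomputable def PhiY : (↥(LinearMap.ker (U : X →ₗ[ℝ] X)) × ↥(LinearMap.ker (V : Y →ₗ[ℝ] Y))ᗮ) ≃L[ℝ]
    (↥(LinearMap.ker (V : Y →ₗ[ℝ] Y))ᗮ × ↥(LinearMap.ker ((ContinuousLinearMap.adjoint U : X →L[ℝ] X) : X →ₗ[ℝ] X))) :=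
  (phiV U V K).trans (epsV U V Kp).symm

lemma epsV_PhiY (q : ↥(LinearMap.ker (U : X →ₗ[ℝ] X)) × ↥(LinearMap.ker (V : Y →ₗ[ℝ] Y))ᗮ) :
    epsV U V Kp (PhiY U V K Kp q) = phiV U V K q := by
  simp [PhiY]

/-- Internal decomposition of `(ker U)ᗮ`. -/
noncomputable def thetaN : ↥(LinearMap.ker (U : X →ₗ[ℝ] X))ᗮ ≃L[ℝ]
    (↥(LinearMap.ker (V : Y →ₗ[ℝ] Y))ᗮ × ↥(Mnu U V ν)ᗮ) :=
  (orthDecomp (Mnu U V ν)).symm.trans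
    ((eMd U V ν).symm.prodCongr (ContinuousLinearEquiv.refl ℝ ↥(Mnu U V ν)ᗮ))

lemma thetaN_apply (z : ↥(LinearMap.ker (U : X →ₗ[ℝ] X))ᗮ) :
    thetaN U V ν z = ((eMd U V ν).symm (Submodule.orthogonalProjectionOnto (Mnu U V ν) z),
      Submodule.orthogonalProjectionOnto (Mnu U V ν)ᗮ z) := by
  simp [thetaN]

lemma thetaN_symm_apply (m : ↥(LinearMap.ker (V : Y →ₗ[ℝ] Y))ᗮ) (w : ↥(Mnu U V ν)ᗮ) :
    (thetaN U V ν).symm (m, w) = ↑(eMd U V ν m) + ↑w := by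
  rw [ContinuousLinearEquiv.symm_apply_eq, thetaN_apply]
  have h1 : Submodule.orthogonalProjectionOnto (Mnu U V ν) (↑(eMd U V ν m) + ↑w) = eMd U V ν m := by
    rw [map_add, Submodule.orthogonalProjectionOnto_mem_subspace_eq_self,
      Submodule.orthogonalProjectionOnto_apply_of_mem_orthogonal w.2, add_zero]
  have h2 : Submodule.orthogonalProjectionOnto (Mnu U V ν)ᗮ ((↑(eMd U V ν m) : ↥(LinearMap.ker (U : X →ₗ[ℝ] X))ᗮ) + ↑w)
      = w := by
    rw [map_add, Submodule.orthogonalProjectionOnto_mem_subspace_eq_self,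
      Submodule.orthogonalProjectionOnto_orthogonal_apply_eq_zero (eMd U V ν m).2,
      zero_add]
  rw [h1, h2]
  simp

/-- The model form of the invertible operator `A`. -/
noncomputable def Atil : (↥(LinearMap.ker (U : X →ₗ[ℝ] X)) × ↥(LinearMap.ker (U : X →ₗ[ℝ] X))ᗮ) ≃L[ℝ]
    (↥(LinearMap.ker (U : X →ₗ[ℝ] X))ᗮ × ↥(LinearMap.ker ((ContinuousLinearMap.adjoint U : X →L[ℝ] X) : X →ₗ[ℝ] X))) :=
  ((ContinuousLinearEquiv.refl ℝ ↥(LinearMap.ker (U : X →ₗ[ℝ] X))).prodCongr (thetaN U V ν)).trans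
  ((cassoc _ _ _).trans
  (((PhiY U V K Kp).prodCongr (ContinuousLinearEquiv.refl ℝ ↥(Mnu U V ν)ᗮ)).trans
  ((cswap _ _ _).trans
  (((thetaN U V ν).symm).prodCongr
    (ContinuousLinearEquiv.refl ℝ ↥(LinearMap.ker ((ContinuousLinearMap.adjoint U : X →L[ℝ] X) : X →ₗ[ℝ] X)))))))

/-- The invertible operator `A`. -/
noncomputable def Aeq : X ≃L[ℝ] X :=
  (orthDecomp (LinearMap.ker (U : X →ₗ[ℝ] X))).symm.trans ((Atil U V K Kp ν).trans (psiU U))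

/-- The operator `C`. -/
noncomputable def Cop : X →L[ℝ] Y :=
  (phiV U V K : (↥(LinearMap.ker (U : X →ₗ[ℝ] X)) × ↥(LinearMap.ker (V : Y →ₗ[ℝ] Y))ᗮ) →L[ℝ] Y).comp
    ((Submodule.orthogonalProjectionOnto (LinearMap.ker (U : X →ₗ[ℝ] X))).prod
      (((eMd U V ν).symm : ↥(Mnu U V ν) →L[ℝ] ↥(LinearMap.ker (V : Y →ₗ[ℝ] Y))ᗮ).comp
        ((Submodule.orthogonalProjectionOnto (Mnu U V ν)).comp
          (Submodule.orthogonalProjectionOnto (LinearMap.ker (U : X →ₗ[ℝ] X))ᗮ))))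

lemma Cop_apply (x : X) :
    Cop U V K ν x = phiV U V K (Submodule.orthogonalProjectionOnto (LinearMap.ker (U : X →ₗ[ℝ] X)) x,
      (eMd U V ν).symm (Submodule.orthogonalProjectionOnto (Mnu U V ν)
        (Submodule.orthogonalProjectionOnto (LinearMap.ker (U : X →ₗ[ℝ] X))ᗮ x))) := rfl

/-- The operator `B`. -/
noncomputable def Bop : Y →L[ℝ] X :=
  (psiU U : (↥(LinearMap.ker (U : X →ₗ[ℝ] X))ᗮ ×
      ↥(LinearMap.ker ((ContinuousLinearMap.adjoint U : X →L[ℝ] X) : X →ₗ[ℝ] X))) →L[ℝ] X).comp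
    ((((Mnu U V ν).subtypeL.comp
        ((eMd U V ν) : ↥(LinearMap.ker (V : Y →ₗ[ℝ] Y))ᗮ →L[ℝ] ↥(Mnu U V ν))).prodMap
      (ContinuousLinearMap.id ℝ ↥(LinearMap.ker ((ContinuousLinearMap.adjoint U : X →L[ℝ] X) : X →ₗ[ℝ] X)))).comp
      (((epsV U V Kp).symm : Y →L[ℝ] (↥(LinearMap.ker (V : Y →ₗ[ℝ] Y))ᗮ ×
          ↥(LinearMap.ker ((ContinuousLinearMap.adjoint U : X →L[ℝ] X) : X →ₗ[ℝ] X)))).comp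
        (ContinuousLinearMap.id ℝ Y - V)))

lemma Bop_apply (y : Y) :
    Bop U V Kp ν y = psiU U
      ((↑(eMd U V ν ((epsV U V Kp).symm (y - V y)).1) : ↥(LinearMap.ker (U : X →ₗ[ℝ] X))ᗮ),
        ((epsV U V Kp).symm (y - V y)).2) := rfl

include K Kp ν in
set_option maxHeartbeats 2000000 in
theorem schur_master :
    ∃ (A : X →L[ℝ] X) (B : Y →L[ℝ] X) (C : X →L[ℝ] Y) (D : Y →L[ℝ] Y)
      (A' : X →L[ℝ] X) (D' : Y →L[ℝ] Y),
      A.comp A' = ContinuousLinearMap.id ℝ X ∧ A'.comp A = ContinuousLinearMap.id ℝ X ∧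
      D.comp D' = ContinuousLinearMap.id ℝ Y ∧ D'.comp D = ContinuousLinearMap.id ℝ Y ∧
      U = A - B.comp (D'.comp C) ∧ V = D - C.comp (A'.comp B) := by
  refine ⟨((Aeq U V K Kp ν) : X →L[ℝ] X), Bop U V Kp ν, Cop U V K ν,
    ContinuousLinearMap.id ℝ Y, ((Aeq U V K Kp ν).symm : X →L[ℝ] X),
    ContinuousLinearMap.id ℝ Y, ?_, ?_, ?_, ?_, ?_, ?_⟩
  · ext x
    simp
  · ext x
    simp
  · ext y; rfl
  · ext y; rfl
  · -- U = A - B ∘ (id ∘ C)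
    ext x
    simp only [ContinuousLinearMap.coe_sub', Pi.sub_apply, ContinuousLinearMap.coe_comp',
      Function.comp_apply, ContinuousLinearMap.coe_id', id_eq,
      ContinuousLinearEquiv.coe_coe]
    set a := Submodule.orthogonalProjectionOnto (LinearMap.ker (U : X →ₗ[ℝ] X)) x with ha
    set z := Submodule.orthogonalProjectionOnto (LinearMap.ker (U : X →ₗ[ℝ] X))ᗮ x with hz
    set m0 := (eMd U V ν).symm (Submodule.orthogonalProjectionOnto (Mnu U V ν) z) with hm0
    set w0 := Submodule.orthogonalProjectionOnto (Mnu U V ν)ᗮ z with hw0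
    set p := PhiY U V K Kp (a, m0) with hp
    have hCx : Cop U V K ν x = ↑(K a) + ↑m0 := by
      rw [Cop_apply, ← ha, ← hz, ← hm0, phiV_apply]
    have hCεp : epsV U V Kp p = ↑(K a) + ↑m0 := by
      rw [hp, epsV_PhiY, phiV_apply]
    have hεp : epsV U V Kp p = V ↑p.1 + ↑(Kp p.2) := by
      conv_lhs => rw [← Prod.mk.eta (p := p)]
      rw [epsV_apply]
    have hVCx : V (Cop U V K ν x) = V ↑m0 := by
      rw [hCx, map_add]
      have hK0 : V ↑(K a) = 0 := (K a).2
      rw [hK0, zero_add]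
    have hq : (epsV U V Kp).symm (Cop U V K ν x - V (Cop U V K ν x))
        = (p.1 - m0, p.2) := by
      rw [ContinuousLinearEquiv.symm_apply_eq, epsV_apply, hVCx, hCx]
      have hsub1 : (↑(p.1 - m0) : Y) = ↑p.1 - ↑m0 := rfl
      rw [hsub1, V.map_sub]
      have hcomb : V ↑p.1 + ↑(Kp p.2) = ↑(K a) + ↑m0 := hεp.symm.trans hCεp
      rw [← hcomb]
      abel
    have hBCx : Bop U V Kp ν (Cop U V K ν x)
        = U ↑(↑(eMd U V ν (p.1 - m0)) : ↥(LinearMap.ker (U : X →ₗ[ℝ] X))ᗮ) + ↑p.2 := by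
      rw [Bop_apply, hq, psiU_apply]
    have hAx : (Aeq U V K Kp ν) x
        = U ↑(↑(eMd U V ν p.1) : ↥(LinearMap.ker (U : X →ₗ[ℝ] X))ᗮ)
          + U ↑(↑w0 : ↥(LinearMap.ker (U : X →ₗ[ℝ] X))ᗮ) + ↑p.2 := by
      rw [Aeq]
      simp only [ContinuousLinearEquiv.trans_apply, orthDecomp_symm_apply]
      rw [← ha, ← hz, Atil]
      simp only [ContinuousLinearEquiv.trans_apply, ContinuousLinearEquiv.prodCongr_apply,
        ContinuousLinearEquiv.refl_apply, cassoc_apply, cswap_apply, thetaN_apply]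
      rw [← hm0, ← hw0, ← hp, thetaN_symm_apply, psiU_apply, Submodule.coe_add, map_add]
    have hme : eMd U V ν (p.1 - m0) = eMd U V ν p.1 - eMd U V ν m0 :=
      (eMd U V ν).map_sub p.1 m0
    have hsub2 : (↑(↑(eMd U V ν (p.1 - m0)) : ↥(LinearMap.ker (U : X →ₗ[ℝ] X))ᗮ) : X)
        = ↑(↑(eMd U V ν p.1) : ↥(LinearMap.ker (U : X →ₗ[ℝ] X))ᗮ)
          - ↑(↑(eMd U V ν m0) : ↥(LinearMap.ker (U : X →ₗ[ℝ] X))ᗮ) := by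
      rw [hme]; rfl
    have hUsub : U (↑(↑(eMd U V ν p.1) : ↥(LinearMap.ker (U : X →ₗ[ℝ] X))ᗮ)
          - ↑(↑(eMd U V ν m0) : ↥(LinearMap.ker (U : X →ₗ[ℝ] X))ᗮ))
        = U ↑(↑(eMd U V ν p.1) : ↥(LinearMap.ker (U : X →ₗ[ℝ] X))ᗮ)
          - U ↑(↑(eMd U V ν m0) : ↥(LinearMap.ker (U : X →ₗ[ℝ] X))ᗮ) :=
      U.map_sub _ _
    rw [hAx, hBCx, hsub2, hUsub]
    have h2 : eMd U V ν m0 = Submodule.orthogonalProjectionOnto (Mnu U V ν) z := by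
      rw [hm0, ContinuousLinearEquiv.apply_symm_apply]
    have h3 : (↑(Submodule.orthogonalProjectionOnto (Mnu U V ν) z) : ↥(LinearMap.ker (U : X →ₗ[ℝ] X))ᗮ) + ↑w0 = z := by
      rw [hw0]
      exact orthogonalProjection_add_orthogonalProjection_orthogonal _ z
    have hx : (↑a : X) + ↑z = x := by
      rw [ha, hz]
      exact orthogonalProjection_add_orthogonalProjection_orthogonal _ x
    have hUa : U ↑a = 0 := a.2
    have h4 : U x = U ↑z := by
      rw [← hx, map_add, hUa, zero_add]
    have h5 : (↑(↑(Submodule.orthogonalProjectionOnto (Mnu U V ν) z) : ↥(LinearMap.ker (U : X →ₗ[ℝ] X))ᗮ) : X)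
        + ↑(↑w0 : ↥(LinearMap.ker (U : X →ₗ[ℝ] X))ᗮ) = ↑z := congrArg Subtype.val h3
    rw [h4, h2, ← h5, map_add]
    abel
  · -- V = id - C ∘ (A' ∘ B)
    ext y
    simp only [ContinuousLinearMap.coe_sub', Pi.sub_apply, ContinuousLinearMap.coe_comp',
      Function.comp_apply, ContinuousLinearMap.coe_id', id_eq,
      ContinuousLinearEquiv.coe_coe]
    set q := (epsV U V Kp).symm (y - V y) with hq
    set r := (phiV U V K).symm (y - V y) with hr
    have hBy : Bop U V Kp ν y
        = psiU U ((↑(eMd U V ν q.1) : ↥(LinearMap.ker (U : X →ₗ[ℝ] X))ᗮ), q.2) := by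
      rw [Bop_apply, ← hq]
    have hPhir : PhiY U V K Kp r = q := by
      rw [PhiY, ContinuousLinearEquiv.trans_apply, hr,
        ContinuousLinearEquiv.apply_symm_apply, ← hq]
    have hθr : thetaN U V ν ↑(eMd U V ν r.2) = (r.2, 0) := by
      rw [thetaN_apply, Submodule.orthogonalProjectionOnto_mem_subspace_eq_self,
        Submodule.orthogonalProjectionOnto_orthogonal_apply_eq_zero (eMd U V ν r.2).2,
        ContinuousLinearEquiv.symm_apply_apply]
    have e1 : Submodule.orthogonalProjectionOnto (LinearMap.ker (U : X →ₗ[ℝ] X))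
        ((↑r.1 : X) + ↑(↑(eMd U V ν r.2) : ↥(LinearMap.ker (U : X →ₗ[ℝ] X))ᗮ)) = r.1 := by
      rw [map_add, Submodule.orthogonalProjectionOnto_mem_subspace_eq_self,
        Submodule.orthogonalProjectionOnto_apply_of_mem_orthogonal
          (↑(eMd U V ν r.2) : ↥(LinearMap.ker (U : X →ₗ[ℝ] X))ᗮ).2, add_zero]
    have e2 : Submodule.orthogonalProjectionOnto (LinearMap.ker (U : X →ₗ[ℝ] X))ᗮ
        ((↑r.1 : X) + ↑(↑(eMd U V ν r.2) : ↥(LinearMap.ker (U : X →ₗ[ℝ] X))ᗮ))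
        = ↑(eMd U V ν r.2) := by
      rw [map_add, Submodule.orthogonalProjectionOnto_mem_subspace_eq_self,
        Submodule.orthogonalProjectionOnto_orthogonal_apply_eq_zero r.1.2, zero_add]
    have hfwd : (Aeq U V K Kp ν)
        ((↑r.1 : X) + ↑(↑(eMd U V ν r.2) : ↥(LinearMap.ker (U : X →ₗ[ℝ] X))ᗮ))
        = Bop U V Kp ν y := by
      rw [Aeq, ContinuousLinearEquiv.trans_apply, ContinuousLinearEquiv.trans_apply,
        orthDecomp_symm_apply, e1, e2, Atil]
      simp only [ContinuousLinearEquiv.trans_apply, ContinuousLinearEquiv.prodCongr_apply,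
        ContinuousLinearEquiv.refl_apply, cassoc_apply, cswap_apply]
      rw [hθr]
      simp only [Prod.fst, Prod.snd]
      rw [Prod.mk.eta, hPhir, thetaN_symm_apply, Submodule.coe_zero, add_zero, psiU_apply,
        hBy, psiU_apply]
    have hAsymm : (Aeq U V K Kp ν).symm (Bop U V Kp ν y)
        = (↑r.1 : X) + ↑(↑(eMd U V ν r.2) : ↥(LinearMap.ker (U : X →ₗ[ℝ] X))ᗮ) := by
      rw [← hfwd, ContinuousLinearEquiv.symm_apply_apply]
    have hCA : Cop U V K ν ((Aeq U V K Kp ν).symm (Bop U V Kp ν y)) = y - V y := by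
      rw [hAsymm, Cop_apply]
      have f1 : Submodule.orthogonalProjectionOnto (LinearMap.ker (U : X →ₗ[ℝ] X))
          ((↑r.1 : X) + ↑(↑(eMd U V ν r.2) : ↥(LinearMap.ker (U : X →ₗ[ℝ] X))ᗮ)) = r.1 := e1
      have f2 := e2
      rw [f1, f2, Submodule.orthogonalProjectionOnto_mem_subspace_eq_self,
        ContinuousLinearEquiv.symm_apply_apply, Prod.mk.eta, hr,
        ContinuousLinearEquiv.apply_symm_apply]
    rw [hCA]
    abel

end Master

/-- Closed range Hilbert space operators whose kernels and cokernels are isomorphic are Schur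
coupled. -/
theorem stmt15 {X Y : Type*} [NormedAddCommGroup X] [InnerProductSpace ℝ X] [CompleteSpace X]
    [NormedAddCommGroup Y] [InnerProductSpace ℝ Y] [CompleteSpace Y]
    (U : X →L[ℝ] X) (V : Y →L[ℝ] Y)
    (hU : IsClosed (Set.range U)) (hV : IsClosed (Set.range V))
    (K : ↥(LinearMap.ker (U : X →ₗ[ℝ] X)) ≃L[ℝ] ↥(LinearMap.ker (V : Y →ₗ[ℝ] Y)))
    (Kp : ↥(LinearMap.ker ((ContinuousLinearMap.adjoint U : X →L[ℝ] X) : X →ₗ[ℝ] X)) ≃L[ℝ]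
      ↥(LinearMap.ker ((ContinuousLinearMap.adjoint V : Y →L[ℝ] Y) : Y →ₗ[ℝ] Y))) :
    ∃ (A : X →L[ℝ] X) (B : Y →L[ℝ] X) (C : X →L[ℝ] Y) (D : Y →L[ℝ] Y)
      (A' : X →L[ℝ] X) (D' : Y →L[ℝ] Y),
      A.comp A' = ContinuousLinearMap.id ℝ X ∧ A'.comp A = ContinuousLinearMap.id ℝ X ∧
      D.comp D' = ContinuousLinearMap.id ℝ Y ∧ D'.comp D = ContinuousLinearMap.id ℝ Y ∧
      U = A - B.comp (D'.comp C) ∧ V = D - C.comp (A'.comp B) := by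
  haveI : CompleteSpace ↥(LinearMap.range (U : X →ₗ[ℝ] X)) := by
    refine IsComplete.completeSpace_coe (IsClosed.isComplete ?_)
    have h : ((LinearMap.range (U : X →ₗ[ℝ] X) : Submodule ℝ X) : Set X) = Set.range ⇑U :=
      LinearMap.coe_range _
    rw [h]; exact hU
  haveI : CompleteSpace ↥(LinearMap.range (V : Y →ₗ[ℝ] Y)) := by
    refine IsComplete.completeSpace_coe (IsClosed.isComplete ?_)
    have h : ((LinearMap.range (V : Y →ₗ[ℝ] Y) : Submodule ℝ Y) : Set Y) = Set.range ⇑V :=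
      LinearMap.coe_range _
    rw [h]; exact hV
  rcases hilbert_embed_or ↥(LinearMap.ker (V : Y →ₗ[ℝ] Y))ᗮ ↥(LinearMap.ker (U : X →ₗ[ℝ] X))ᗮ with h | h
  · obtain ⟨ν⟩ := h
    exact schur_master U V K Kp ν
  · obtain ⟨ν⟩ := h
    obtain ⟨A, B, C, D, A', D', g1, g2, g3, g4, g5, g6⟩ :=
      schur_master V U K.symm Kp.symm ν
    exact ⟨D, C, B, A, D', A', g3, g4, g1, g2, g6, g5⟩
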